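/- Fix 0 < q < 1, w ≥ 1, k₁,…,k_w ∈ ℕ, x₁,…,x_w ∈ [0,1] and t ∈ ℝ. Then the family indexed by (n₁,…,n_w) ∈ ℕ^w with terms ∏_{i=1}^{w} B_{k_i,n_i}(x_i; q) t^{n_i}/n_i! is summable, and its sum equals ∏_{i=1}^{w} ((t·[x_i]_q)^{k_i}/k_i!) · exp(t·Σ_{i=1}^{w} [1−x_i]_q); that is, this expression is the generating function of the modified q-Bernstein polynomials of several variables. -/

import Mathlib

open Finset

/-- The `q`-number `[x]_q = (1 - q^x)/(1 - q)` (real exponent). -/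
noncomputable def qnum (q x : ℝ) : ℝ := (1 - q ^ x) / (1 - q)

/-- The modified `q`-Bernstein polynomial
`B_{k,n}(x;q) = C(n,k) [x]_q^k [1-x]_q^(n-k)`. -/
noncomputable def qBern (q : ℝ) (k n : ℕ) (x : ℝ) : ℝ :=
  (n.choose k : ℝ) * qnum q x ^ k * qnum q (1 - x) ^ (n - k)

/-- One-variable generating function. -/
theorem qsingle (b c t : ℝ) (k : ℕ) :
    HasSum (fun n : ℕ => (n.choose k : ℝ) * b ^ k * c ^ (n - k) * t ^ n / n.factorial)
      ((t * b) ^ k / (k.factorial : ℝ) * Real.exp (t * c)) := by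
  rw [← (add_left_injective k).hasSum_iff (g := fun m : ℕ => m + k) (by
    intro n hn
    have hk : n < k := by
      by_contra h
      exact hn ⟨n - k, by simp; omega⟩
    simp [Nat.choose_eq_zero_of_lt hk])]
  have h := (NormedSpace.expSeries_div_hasSum_exp (t * c)).mul_left
      ((t * b) ^ k / (k.factorial : ℝ))
  rw [← Real.exp_eq_exp_ℝ] at h
  convert h using 2 with m
  · rfl
  simp only [Function.comp]
  have hc : ((m + k).choose k : ℝ) * k.factorial * m.factorial = ((m + k).factorial : ℝ) := by
    exact_mod_cast congrArg (Nat.cast : ℕ → ℝ)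
      (by simpa using Nat.choose_mul_factorial_mul_factorial (Nat.le_add_left k m))
  have h1 : ((m + k).factorial : ℝ) ≠ 0 := Nat.cast_ne_zero.mpr (Nat.factorial_ne_zero _)
  have h2 : (k.factorial : ℝ) ≠ 0 := Nat.cast_ne_zero.mpr (Nat.factorial_ne_zero _)
  have h3 : (m.factorial : ℝ) ≠ 0 := Nat.cast_ne_zero.mpr (Nat.factorial_ne_zero _)
  simp only [Nat.add_sub_cancel]
  field_simp
  rw [← hc]
  ring

/-- Products of summable families over a pi type. -/
theorem qpi : ∀ (n : ℕ) (f : Fin n → ℕ → ℝ) (a : Fin n → ℝ),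
    (∀ i, HasSum (f i) (a i)) → (∀ i, Summable fun m => ‖f i m‖) →
    HasSum (fun v : Fin n → ℕ => ∏ i, f i (v i)) (∏ i, a i) ∧
      Summable (fun v : Fin n → ℕ => ‖∏ i, f i (v i)‖) := by
  intro n
  induction n with
  | zero =>
    intro f a _ _
    constructor
    · simpa using hasSum_single (f := fun _ : Fin 0 → ℕ => (1 : ℝ)) default
        (fun b hb => absurd (Subsingleton.elim b default) hb)
    · exact (hasSum_single (f := fun _ : Fin 0 → ℕ => ‖(1 : ℝ)‖) default
        (fun b hb => absurd (Subsingleton.elim b default) hb)).summable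
  | succ n ih =>
    intro f a h hn
    obtain ⟨ih1, ih2⟩ := ih (fun i => f i.succ) (fun i => a i.succ)
      (fun i => h i.succ) (fun i => hn i.succ)
    have hcomp : (fun p : ℕ × (Fin n → ℕ) =>
          ∏ i, f i (Fin.consEquiv (fun _ => ℕ) p i)) =
        fun p => f 0 p.1 * ∏ i : Fin n, f i.succ (p.2 i) := by
      funext p
      rw [Fin.prod_univ_succ]
      simp [Fin.consEquiv]
    have hsum : Summable (fun p : ℕ × (Fin n → ℕ) =>
        ‖f 0 p.1 * ∏ i : Fin n, f i.succ (p.2 i)‖) :=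
      Summable.mul_norm (f := f 0)
        (g := fun v : Fin n → ℕ => ∏ i : Fin n, f i.succ (v i)) (hn 0) ih2
    have hs : HasSum (fun p : ℕ × (Fin n → ℕ) =>
        f 0 p.1 * ∏ i : Fin n, f i.succ (p.2 i)) (a 0 * ∏ i : Fin n, a i.succ) :=
      HasSum.mul (f := f 0) (g := fun v : Fin n → ℕ => ∏ i : Fin n, f i.succ (v i))
        (h 0) ih1
        (Summable.of_norm (f := fun p : ℕ × (Fin n → ℕ) =>
          f 0 p.1 * ∏ i : Fin n, f i.succ (p.2 i)) hsum)
    constructor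
    · rw [← (Fin.consEquiv (fun _ => ℕ)).hasSum_iff, Fin.prod_univ_succ]
      have : ((fun v : Fin (n+1) → ℕ => ∏ i : Fin (n+1), f i (v i)) ∘
          ⇑(Fin.consEquiv fun _ => ℕ)) = fun p : ℕ × (Fin n → ℕ) =>
          f 0 p.1 * ∏ i : Fin n, f i.succ (p.2 i) := hcomp
      rw [this]
      exact hs
    · rw [← (Fin.consEquiv (fun _ => ℕ)).summable_iff]
      exact hsum.congr fun p => by
        rw [Function.comp_apply]
        exact congrArg norm (congrFun hcomp p).symm

/-- The generating function of modified `q`-Bernstein polynomials of several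
variables: the family `(n₁,…,n_w) ↦ ∏ᵢ B_{kᵢ,nᵢ}(xᵢ;q) t^{nᵢ}/nᵢ!` is summable
with sum `∏ᵢ ((t [xᵢ]_q)^{kᵢ}/kᵢ!) · exp(t Σᵢ [1−xᵢ]_q)`. -/
theorem modified_qBernstein_generating_function
    (q : ℝ) (hq0 : 0 < q) (hq1 : q < 1)
    (w : ℕ) (hw : 1 ≤ w) (k : Fin w → ℕ) (x : Fin w → ℝ)
    (hx : ∀ i, x i ∈ Set.Icc (0 : ℝ) 1) (t : ℝ) :
    HasSum
      (fun n : Fin w → ℕ =>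
        ∏ i, qBern q (k i) (n i) (x i) * t ^ (n i) / ((n i).factorial : ℝ))
      ((∏ i, (t * qnum q (x i)) ^ (k i) / ((k i).factorial : ℝ)) *
        Real.exp (t * ∑ i, qnum q (1 - x i))) := by
  set b : Fin w → ℝ := fun i => qnum q (x i)
  set c : Fin w → ℝ := fun i => qnum q (1 - x i)
  have hsingle : ∀ i, HasSum
      (fun m : ℕ => qBern q (k i) m (x i) * t ^ m / (m.factorial : ℝ))
      ((t * b i) ^ (k i) / ((k i).factorial : ℝ) * Real.exp (t * c i)) := by
    intro i
    simpa [qBern] using qsingle (b i) (c i) t (k i)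
  have hnorm : ∀ i, Summable
      (fun m : ℕ => ‖qBern q (k i) m (x i) * t ^ m / (m.factorial : ℝ)‖) := by
    intro i
    refine (qsingle |b i| |c i| |t| (k i)).summable.congr fun m => ?_
    rw [Real.norm_eq_abs, qBern]
    rw [abs_div, abs_mul, abs_mul, abs_mul, abs_pow, abs_pow, abs_pow]
    simp [Nat.abs_cast, b, c]
  have key := (qpi w
    (fun i m => qBern q (k i) m (x i) * t ^ m / (m.factorial : ℝ))
    (fun i => (t * b i) ^ (k i) / ((k i).factorial : ℝ) * Real.exp (t * c i))
    hsingle hnorm).1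
  have heq : (∏ i, (t * b i) ^ (k i) / ((k i).factorial : ℝ) * Real.exp (t * c i))
      = (∏ i, (t * b i) ^ (k i) / ((k i).factorial : ℝ)) *
        Real.exp (t * ∑ i, c i) := by
    rw [mul_sum, Real.exp_sum, ← Finset.prod_mul_distrib]
  rw [← heq]
  exact key
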